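/- arXiv:1605.00751 — 13 statements merged into one kernel-verified Lean document; each statement's English description precedes it below -/
import Mathlib

section
/- Let M be a probability measure on a measurable space X, let η, f : X → [0,1] be measurable with f(x) < 1/2 for all x, and let η̄(x) = (1 − 2f(x))·η(x) + f(x). Let ℓ₁, ℓ₋₁ : ℝ → [0,∞) satisfy ℓ₁(v) + ℓ₋₁(v) = C for all v ∈ ℝ, for some constant C ≥ 0, and let L(p,v) = p·ℓ₁(v) + (1−p)·ℓ₋₁(v). Then for any measurable scorer s : X → ℝ for which all the integrals below are finite, ∫ L(η(x), s(x)) dM(x) = ∫ (1 − 2f(x))⁻¹ · L(η̄(x), s(x)) dM(x) − C·∫ f(x)/(1 − 2f(x)) dM(x). In particular, the clean risk equals the instance-weighted corrupted risk, with weight w(x) = (1 − 2f(x))⁻¹, plus a term independent of the scorer s. -/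
open MeasureTheory

/-- Under instance-dependent noise with flip function `f` (with `f x < 1/2`),
for a loss whose components sum to a constant `C`, the clean risk equals the
instance-weighted corrupted risk (weight `(1 - 2 f x)⁻¹`) plus a term
independent of the scorer. -/
theorem clean_risk_eq_weighted_corrupted_risk
    {X : Type*} [MeasurableSpace X] (M : Measure X) [IsProbabilityMeasure M]
    (η f : X → ℝ) (hη : Measurable η) (hf : Measurable f)
    (hη01 : ∀ x, η x ∈ Set.Icc (0 : ℝ) 1)
    (hf0 : ∀ x, 0 ≤ f x) (hfhalf : ∀ x, f x < 1 / 2)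
    (ηbar : X → ℝ) (hηbar : ∀ x, ηbar x = (1 - 2 * f x) * η x + f x)
    (lpos lneg : ℝ → ℝ) (hlpos : ∀ v, 0 ≤ lpos v) (hlneg : ∀ v, 0 ≤ lneg v)
    (C : ℝ) (hC : 0 ≤ C) (hsum : ∀ v, lpos v + lneg v = C)
    (L : ℝ → ℝ → ℝ) (hL : ∀ p v, L p v = p * lpos v + (1 - p) * lneg v)
    (s : X → ℝ) (hs : Measurable s)
    (hint₁ : Integrable (fun x => L (η x) (s x)) M)
    (hint₂ : Integrable (fun x => (1 - 2 * f x)⁻¹ * L (ηbar x) (s x)) M)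
    (hint₃ : Integrable (fun x => f x / (1 - 2 * f x)) M) :
    ∫ x, L (η x) (s x) ∂M
      = ∫ x, (1 - 2 * f x)⁻¹ * L (ηbar x) (s x) ∂M
        - C * ∫ x, f x / (1 - 2 * f x) ∂M := by
  have key : ∀ x, (1 - 2 * f x)⁻¹ * L (ηbar x) (s x)
      = L (η x) (s x) + C * (f x / (1 - 2 * f x)) := by
    intro x
    have hne : 1 - 2 * f x ≠ 0 := by have := hfhalf x; intro h; linarith
    rw [hηbar, hL, hL]
    field_simp
    linear_combination (f x * (1 - 2 * f x) + 2 * f x ^ 2) * hsum (s x)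
  have : ∫ x, (1 - 2 * f x)⁻¹ * L (ηbar x) (s x) ∂M
      = ∫ x, (L (η x) (s x) + C * (f x / (1 - 2 * f x))) ∂M := by
    exact integral_congr_ae (Filter.Eventually.of_forall key)
  rw [this, integral_add hint₁ (hint₃.const_mul C), integral_const_mul]
  ring
end

section
/- Let ℓ₁, ℓ₋₁ : ℝ → [0,∞) satisfy ℓ₁(v) + ℓ₋₁(v) = C for all v ∈ ℝ, for some constant C ≥ 0, and let L(p,v) = p·ℓ₁(v) + (1−p)·ℓ₋₁(v). Let η : X → [0,1], let f : X → [0,1] satisfy f(x) < 1/2 for all x, and let η̄(x) = (1 − 2f(x))·η(x) + f(x). Then for every x ∈ X and every v* ∈ ℝ: v* minimizes v ↦ L(η(x), v) over ℝ if and only if v* minimizes v ↦ L(η̄(x), v) over ℝ. Consequently the Bayes-optimal scorers for ℓ on the clean and corrupted distributions coincide. -/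
/-- For a loss whose components sum to a constant, under instance-dependent
noise the pointwise Bayes-optimal scores on the clean and corrupted
distributions coincide: `v*` minimizes `v ↦ L (η x) v` iff it minimizes
`v ↦ L (η̄ x) v`. -/
theorem bayes_optimal_scorers_coincide
    {X : Type*}
    (η f : X → ℝ)
    (hη01 : ∀ x, η x ∈ Set.Icc (0 : ℝ) 1)
    (hf0 : ∀ x, 0 ≤ f x) (hfhalf : ∀ x, f x < 1 / 2)
    (ηbar : X → ℝ) (hηbar : ∀ x, ηbar x = (1 - 2 * f x) * η x + f x)
    (lpos lneg : ℝ → ℝ) (hlpos : ∀ v, 0 ≤ lpos v) (hlneg : ∀ v, 0 ≤ lneg v)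
    (C : ℝ) (hC : 0 ≤ C) (hsum : ∀ v, lpos v + lneg v = C)
    (L : ℝ → ℝ → ℝ) (hL : ∀ p v, L p v = p * lpos v + (1 - p) * lneg v) :
    ∀ (x : X) (vstar : ℝ),
      (∀ v : ℝ, L (η x) vstar ≤ L (η x) v) ↔
      (∀ v : ℝ, L (ηbar x) vstar ≤ L (ηbar x) v) := by
  intro x vstar
  have key : ∀ p u w : ℝ, (L p u ≤ L p w ↔ (2 * p - 1) * lpos u ≤ (2 * p - 1) * lpos w) := by
    intro p u w
    have hu : lneg u = C - lpos u := by linarith [hsum u]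
    have hw : lneg w = C - lpos w := by linarith [hsum w]
    rw [hL, hL, hu, hw]
    constructor <;> intro h <;> nlinarith
  have ha : 0 < 1 - 2 * f x := by linarith [hfhalf x]
  have hbar : 2 * ηbar x - 1 = (1 - 2 * f x) * (2 * η x - 1) := by
    rw [hηbar]; ring
  constructor <;> intro h v
  · rw [key, hbar]
    have := (key (η x) vstar v).mp (h v)
    calc (1 - 2 * f x) * (2 * η x - 1) * lpos vstar
        = (1 - 2 * f x) * ((2 * η x - 1) * lpos vstar) := by ring
      _ ≤ (1 - 2 * f x) * ((2 * η x - 1) * lpos v) := by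
          exact mul_le_mul_of_nonneg_left this ha.le
      _ = (1 - 2 * f x) * (2 * η x - 1) * lpos v := by ring
  · rw [key]
    have := (key (ηbar x) vstar v).mp (h v)
    rw [hbar] at this
    nlinarith
end

section
/- Let M be a probability measure on a measurable space X, let η : X → [0,1] be measurable, let f : X → [0,1] be measurable with f(x) ≤ ρ_max for all x, where ρ_max < 1/2, and let η̄(x) = (1 − 2f(x))·η(x) + f(x). Let ℓ₁, ℓ₋₁ : ℝ → [0,∞) satisfy ℓ₁(v) + ℓ₋₁(v) = C for all v, and L(p,v) = p·ℓ₁(v) + (1−p)·ℓ₋₁(v). Suppose s* : X → ℝ is pointwise Bayes-optimal for the corrupted distribution, i.e. L(η̄(x), s*(x)) ≤ L(η̄(x), v) for all x ∈ X and v ∈ ℝ. Then for any measurable scorer s : X → ℝ for which all the risks below are finite, ∫ L(η(x), s(x)) dM − ∫ L(η(x), s*(x)) dM ≤ (1 − 2ρ_max)⁻¹ · ( ∫ L(η̄(x), s(x)) dM − ∫ L(η̄(x), s*(x)) dM ); that is, the clean ℓ-regret of s is at most (1 − 2ρ_max)⁻¹ times its corrupted ℓ-regret. -/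
open MeasureTheory

/-- Under instance-dependent noise bounded by `ρ_max < 1/2`, for a loss whose
components sum to a constant, the clean `ℓ`-regret of any scorer is at most
`(1 - 2 ρ_max)⁻¹` times its corrupted `ℓ`-regret. -/
theorem clean_regret_le_corrupted_regret
    {X : Type*} [MeasurableSpace X] (M : Measure X) [IsProbabilityMeasure M]
    (η f : X → ℝ) (hη : Measurable η) (hf : Measurable f)
    (hη01 : ∀ x, η x ∈ Set.Icc (0 : ℝ) 1)
    (hf0 : ∀ x, 0 ≤ f x)
    (ρmax : ℝ) (hfρ : ∀ x, f x ≤ ρmax) (hρ : ρmax < 1 / 2)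
    (ηbar : X → ℝ) (hηbar : ∀ x, ηbar x = (1 - 2 * f x) * η x + f x)
    (lpos lneg : ℝ → ℝ) (hlpos : ∀ v, 0 ≤ lpos v) (hlneg : ∀ v, 0 ≤ lneg v)
    (C : ℝ) (hsum : ∀ v, lpos v + lneg v = C)
    (L : ℝ → ℝ → ℝ) (hL : ∀ p v, L p v = p * lpos v + (1 - p) * lneg v)
    (sstar : X → ℝ) (hsstar : Measurable sstar)
    (hopt : ∀ (x : X) (v : ℝ), L (ηbar x) (sstar x) ≤ L (ηbar x) v)
    (s : X → ℝ) (hs : Measurable s)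
    (hint₁ : Integrable (fun x => L (η x) (s x)) M)
    (hint₂ : Integrable (fun x => L (η x) (sstar x)) M)
    (hint₃ : Integrable (fun x => L (ηbar x) (s x)) M)
    (hint₄ : Integrable (fun x => L (ηbar x) (sstar x)) M) :
    (∫ x, L (η x) (s x) ∂M) - (∫ x, L (η x) (sstar x) ∂M)
      ≤ (1 - 2 * ρmax)⁻¹ *
        ((∫ x, L (ηbar x) (s x) ∂M) - (∫ x, L (ηbar x) (sstar x) ∂M)) := by
  have hρpos : 0 < 1 - 2 * ρmax := by linarith
  -- pointwise bound
  have hpt : ∀ x, L (η x) (s x) - L (η x) (sstar x)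
      ≤ (1 - 2 * ρmax)⁻¹ * (L (ηbar x) (s x) - L (ηbar x) (sstar x)) := by
    intro x
    have e1 : lneg (s x) = C - lpos (s x) := by linarith [hsum (s x)]
    have e2 : lneg (sstar x) = C - lpos (sstar x) := by linarith [hsum (sstar x)]
    have hclean : L (η x) (s x) - L (η x) (sstar x)
        = (2 * η x - 1) * (lpos (s x) - lpos (sstar x)) := by
      rw [hL, hL, e1, e2]; ring
    have hcorr : L (ηbar x) (s x) - L (ηbar x) (sstar x)
        = (1 - 2 * f x) * ((2 * η x - 1) * (lpos (s x) - lpos (sstar x))) := by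
      rw [hL, hL, e1, e2, hηbar]; ring
    have hg0 : 0 ≤ L (ηbar x) (s x) - L (ηbar x) (sstar x) :=
      sub_nonneg.mpr (hopt x (s x))
    have hfx : 0 < 1 - 2 * f x := by have := hfρ x; linarith
    have hclean0 : 0 ≤ (2 * η x - 1) * (lpos (s x) - lpos (sstar x)) := by
      nlinarith [hcorr]
    rw [hclean, hcorr, le_inv_mul_iff₀ hρpos]
    have h1 : 1 - 2 * ρmax ≤ 1 - 2 * f x := by have := hfρ x; linarith
    nlinarith
  have hi₁₂ := hint₁.sub hint₂
  have hi₃₄ : Integrable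
      (fun x => (1 - 2 * ρmax)⁻¹ * (L (ηbar x) (s x) - L (ηbar x) (sstar x))) M :=
    (hint₃.sub hint₄).const_mul _
  calc (∫ x, L (η x) (s x) ∂M) - (∫ x, L (η x) (sstar x) ∂M)
      = ∫ x, (L (η x) (s x) - L (η x) (sstar x)) ∂M := (integral_sub hint₁ hint₂).symm
    _ ≤ ∫ x, (1 - 2 * ρmax)⁻¹ * (L (ηbar x) (s x) - L (ηbar x) (sstar x)) ∂M :=
        integral_mono hi₁₂ hi₃₄ hpt
    _ = (1 - 2 * ρmax)⁻¹ *
        ((∫ x, L (ηbar x) (s x) ∂M) - (∫ x, L (ηbar x) (sstar x) ∂M)) := by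
        rw [integral_const_mul, integral_sub hint₃ hint₄]
end

section
/- Let M be a probability measure on a measurable space X, let w, r : X → [0,∞) be measurable, and suppose w(x) ≤ (1 − 2ρ_max)⁻¹ for all x, where ρ_max < 1/2, and r(x) ≤ R for all x, where R < ∞. Then for every α ∈ [0,1], ∫ w(x)·r(x) dM(x) ≤ (1 − 2ρ_max)^{−(1−α)} · R^α · ( ∫ w(x) dM(x) )^α · ( ∫ r(x) dM(x) )^{1−α}. In particular, taking w(x) = (1 − 2f(x))⁻¹ for an instance-dependent flip function f with f(x) ≤ ρ_max, and r(x) the pointwise conditional regret L(η̄(x), s(x)) − L(η̄(x), s*(x)) of a scorer s against a pointwise Bayes-optimal scorer s* for the corrupted class-probability function η̄, this bounds the clean ℓ-regret by (1 − 2ρ_max)^{−(1−α)} · R^α · (∫ w dM)^α · (corrupted ℓ-regret)^{1−α} for losses whose components sum to a constant. -/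
open MeasureTheory

/-- A Hölder-type interpolation bound: if `w ≤ (1 - 2 ρ_max)⁻¹` and `r ≤ R`
pointwise, then for every `α ∈ [0,1]`,
`∫ w r dM ≤ (1 - 2 ρ_max)^{-(1-α)} · R^α · (∫ w dM)^α · (∫ r dM)^{1-α}`. -/
theorem weighted_regret_interpolation_bound
    {X : Type*} [MeasurableSpace X] (M : Measure X) [IsProbabilityMeasure M]
    (w r : X → ℝ) (hw : Measurable w) (hr : Measurable r)
    (hw0 : ∀ x, 0 ≤ w x) (hr0 : ∀ x, 0 ≤ r x)
    (ρmax : ℝ) (hρ : ρmax < 1 / 2)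
    (hwle : ∀ x, w x ≤ (1 - 2 * ρmax)⁻¹)
    (R : ℝ) (hrle : ∀ x, r x ≤ R)
    (hint₁ : Integrable (fun x => w x * r x) M)
    (hint₂ : Integrable w M) (hint₃ : Integrable r M) :
    ∀ α : ℝ, α ∈ Set.Icc (0 : ℝ) 1 →
      ∫ x, w x * r x ∂M
        ≤ (1 - 2 * ρmax) ^ (-(1 - α)) * R ^ α *
          (∫ x, w x ∂M) ^ α * (∫ x, r x ∂M) ^ (1 - α) := by
  intro α hα
  obtain ⟨hα0, hα1⟩ := hα
  have hC : (0 : ℝ) < 1 - 2 * ρmax := by linarith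
  set C : ℝ := (1 - 2 * ρmax)⁻¹ with hCdef
  have hCpos : 0 < C := inv_pos.mpr hC
  -- trivial case α = 0
  rcases eq_or_lt_of_le hα0 with h0 | h0
  · subst h0
    have hmono : ∫ x, w x * r x ∂M ≤ ∫ x, C * r x ∂M := by
      refine integral_mono hint₁ (hint₃.const_mul C) fun x => ?_
      exact mul_le_mul_of_nonneg_right (hwle x) (hr0 x)
    rw [integral_const_mul] at hmono
    have hr_int : 0 ≤ ∫ x, r x ∂M := integral_nonneg hr0
    calc ∫ x, w x * r x ∂M ≤ C * ∫ x, r x ∂M := hmono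
      _ = (1 - 2 * ρmax) ^ (-(1 - (0:ℝ))) * R ^ (0:ℝ) *
          (∫ x, w x ∂M) ^ (0:ℝ) * (∫ x, r x ∂M) ^ (1 - (0:ℝ)) := by
          simp [Real.rpow_neg_one, Real.rpow_natCast, hCdef]
  -- trivial case α = 1
  rcases eq_or_lt_of_le hα1 with h1 | h1
  · subst h1
    have hmono : ∫ x, w x * r x ∂M ≤ ∫ x, R * w x ∂M := by
      refine integral_mono hint₁ (hint₂.const_mul R) fun x => ?_
      rw [mul_comm (R : ℝ)]
      exact mul_le_mul_of_nonneg_left (hrle x) (hw0 x)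
    rw [integral_const_mul] at hmono
    calc ∫ x, w x * r x ∂M ≤ R * ∫ x, w x ∂M := hmono
      _ = (1 - 2 * ρmax) ^ (-(1 - (1:ℝ))) * R ^ (1:ℝ) *
          (∫ x, w x ∂M) ^ (1:ℝ) * (∫ x, r x ∂M) ^ (1 - (1:ℝ)) := by
          simp
  -- main case 0 < α < 1
  have hβ : 0 < 1 - α := by linarith
  have hX : Nonempty X := by
    by_contra h
    have : M Set.univ = 0 := by
      rw [Set.univ_eq_empty_iff.mpr (not_nonempty_iff.mp h)]; simp
    simp [measure_univ] at this
  have hR0 : (0 : ℝ) ≤ R := le_trans (hr0 (Classical.arbitrary X)) (hrle _)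
  -- pointwise bound: w x * r x ≤ C^(1-α) * R^α * (w x ^ α * r x ^ (1-α))
  have hpt : ∀ x, w x * r x ≤ C ^ (1 - α) * R ^ α * (w x ^ α * r x ^ (1 - α)) := by
    intro x
    have hsplitw : w x = w x ^ α * w x ^ (1 - α) := by
      rw [← Real.rpow_add' (hw0 x) (by norm_num)]
      simp
    have hsplitr : r x = r x ^ α * r x ^ (1 - α) := by
      rw [← Real.rpow_add' (hr0 x) (by norm_num)]
      simp
    calc w x * r x = (w x ^ (1 - α) * r x ^ α) * (w x ^ α * r x ^ (1 - α)) := by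
          conv_lhs => rw [hsplitw, hsplitr]
          ring
      _ ≤ (C ^ (1 - α) * R ^ α) * (w x ^ α * r x ^ (1 - α)) := by
          refine mul_le_mul_of_nonneg_right ?_
            (mul_nonneg (Real.rpow_nonneg (hw0 x) _) (Real.rpow_nonneg (hr0 x) _))
          exact mul_le_mul (Real.rpow_le_rpow (hw0 x) (hwle x) hβ.le)
            (Real.rpow_le_rpow (hr0 x) (hrle x) hα0)
            (Real.rpow_nonneg (hr0 x) _) (Real.rpow_nonneg hCpos.le _)
      _ = C ^ (1 - α) * R ^ α * (w x ^ α * r x ^ (1 - α)) := by ring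
  -- Hölder for the cross term
  have hpq : Real.HolderConjugate (1 / α) (1 / (1 - α)) := by
    constructor
    · simp only [one_div, inv_inv]; ring
    · exact one_div_pos.mpr h0
    · exact one_div_pos.mpr hβ
  have hwm : MemLp (fun x => w x ^ α) (ENNReal.ofReal (1 / α)) M := by
    refine (memLp_top_of_bound (((Real.continuous_rpow_const hα0).measurable.comp hw).aestronglyMeasurable) (C ^ α) ?_).mono_exponent le_top
    filter_upwards with x
    simp only [Function.comp_apply]
    rw [Real.norm_of_nonneg (Real.rpow_nonneg (hw0 x) _)]
    exact Real.rpow_le_rpow (hw0 x) (hwle x) hα0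
  have hrm : MemLp (fun x => r x ^ (1 - α)) (ENNReal.ofReal (1 / (1 - α))) M := by
    refine (memLp_top_of_bound (((Real.continuous_rpow_const hβ.le).measurable.comp hr).aestronglyMeasurable) (R ^ (1 - α)) ?_).mono_exponent le_top
    filter_upwards with x
    simp only [Function.comp_apply]
    rw [Real.norm_of_nonneg (Real.rpow_nonneg (hr0 x) _)]
    exact Real.rpow_le_rpow (hr0 x) (hrle x) hβ.le
  have hholder := integral_mul_le_Lp_mul_Lq_of_nonneg hpq
    (Filter.Eventually.of_forall fun x => Real.rpow_nonneg (hw0 x) α)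
    (Filter.Eventually.of_forall fun x => Real.rpow_nonneg (hr0 x) (1 - α))
    hwm hrm
  have hwpow : (fun x => (w x ^ α) ^ (1 / α)) = w := by
    funext x
    rw [← Real.rpow_mul (hw0 x), mul_one_div_cancel h0.ne', Real.rpow_one]
  have hrpow : (fun x => (r x ^ (1 - α)) ^ (1 / (1 - α))) = r := by
    funext x
    rw [← Real.rpow_mul (hr0 x), mul_one_div_cancel hβ.ne', Real.rpow_one]
  have hexp1 : 1 / (1 / α) = α := one_div_one_div α
  have hexp2 : 1 / (1 / (1 - α)) = 1 - α := one_div_one_div (1 - α)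
  have hholder' : ∫ x, w x ^ α * r x ^ (1 - α) ∂M
      ≤ (∫ x, w x ∂M) ^ α * (∫ x, r x ∂M) ^ (1 - α) := by
    calc ∫ x, w x ^ α * r x ^ (1 - α) ∂M
        ≤ (∫ x, (w x ^ α) ^ (1 / α) ∂M) ^ (1 / (1 / α)) *
          (∫ x, (r x ^ (1 - α)) ^ (1 / (1 - α)) ∂M) ^ (1 / (1 / (1 - α))) := hholder
      _ = (∫ x, w x ∂M) ^ α * (∫ x, r x ∂M) ^ (1 - α) := by
          simp only [hexp1, hexp2]
          congr 2
          · exact congrArg (fun f => ∫ x, f x ∂M) hwpow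
          · exact congrArg (fun f => ∫ x, f x ∂M) hrpow
  have hint₄ : Integrable (fun x => w x ^ α * r x ^ (1 - α)) M := by
    refine (memLp_top_of_bound ((((Real.continuous_rpow_const hα0).measurable.comp hw).mul ((Real.continuous_rpow_const hβ.le).measurable.comp hr)).aestronglyMeasurable)
      (C ^ α * R ^ (1 - α)) ?_).integrable le_top
    filter_upwards with x
    show ‖w x ^ α * r x ^ (1 - α)‖ ≤ C ^ α * R ^ (1 - α)
    rw [Real.norm_of_nonneg (mul_nonneg (Real.rpow_nonneg (hw0 x) _) (Real.rpow_nonneg (hr0 x) _))]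
    exact mul_le_mul (Real.rpow_le_rpow (hw0 x) (hwle x) hα0)
      (Real.rpow_le_rpow (hr0 x) (hrle x) hβ.le)
      (Real.rpow_nonneg (hr0 x) _) (Real.rpow_nonneg hCpos.le _)
  have hK : 0 ≤ C ^ (1 - α) * R ^ α :=
    mul_nonneg (Real.rpow_nonneg hCpos.le _) (Real.rpow_nonneg hR0 _)
  have hstep : ∫ x, w x * r x ∂M
      ≤ C ^ (1 - α) * R ^ α * ∫ x, w x ^ α * r x ^ (1 - α) ∂M := by
    rw [← integral_const_mul]
    exact integral_mono hint₁ (hint₄.const_mul _) hpt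
  have hCrw : C ^ (1 - α) = (1 - 2 * ρmax) ^ (-(1 - α)) := by
    rw [hCdef, Real.rpow_neg hC.le, ← Real.inv_rpow hC.le]
  calc ∫ x, w x * r x ∂M
      ≤ C ^ (1 - α) * R ^ α * ∫ x, w x ^ α * r x ^ (1 - α) ∂M := hstep
    _ ≤ C ^ (1 - α) * R ^ α * ((∫ x, w x ∂M) ^ α * (∫ x, r x ∂M) ^ (1 - α)) :=
        mul_le_mul_of_nonneg_left hholder' hK
    _ = (1 - 2 * ρmax) ^ (-(1 - α)) * R ^ α *
        (∫ x, w x ∂M) ^ α * (∫ x, r x ∂M) ^ (1 - α) := by rw [hCrw]; ring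
end

section
/- Let η : X → [0,1], let ρ₁, ρ₋₁ : X → [0,1] satisfy ρ₁(x) + ρ₋₁(x) < 1 for all x, and let η̄(x) = (1 − ρ₁(x))·η(x) + ρ₋₁(x)·(1 − η(x)). Then for any t ∈ [0,1] and any x ∈ X: η(x) > t if and only if η̄(x) > (1 − ρ₁(x) − ρ₋₁(x))·t + ρ₋₁(x). -/
/-- Under admissible instance- and label-dependent noise, clean and corrupted
thresholds are related:
`η x > t ↔ η̄ x > (1 - ρ₁ x - ρ₋₁ x) · t + ρ₋₁ x`. -/
theorem clean_corrupt_threshold_iln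
    {X : Type*}
    (η ρ₁ ρneg : X → ℝ)
    (hη01 : ∀ x, η x ∈ Set.Icc (0 : ℝ) 1)
    (hρ₁ : ∀ x, ρ₁ x ∈ Set.Icc (0 : ℝ) 1) (hρneg : ∀ x, ρneg x ∈ Set.Icc (0 : ℝ) 1)
    (hadm : ∀ x, ρ₁ x + ρneg x < 1)
    (ηbar : X → ℝ)
    (hηbar : ∀ x, ηbar x = (1 - ρ₁ x) * η x + ρneg x * (1 - η x)) :
    ∀ (t : ℝ), t ∈ Set.Icc (0 : ℝ) 1 →
      ∀ x : X, η x > t ↔ ηbar x > (1 - ρ₁ x - ρneg x) * t + ρneg x := by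
  intro t ht x
  have h := hadm x
  have hpos : 0 < 1 - ρ₁ x - ρneg x := by linarith
  rw [hηbar x]
  constructor <;> intro hgt <;> nlinarith
end

section
/- Suppose (f₋₁, f₁, s, η) is BCN⁺-admissible with link u, and let η̄ be the corresponding corrupted class-probability function. Then for all x, x' ∈ X: η(x) < η(x') implies η̄(x) < η̄(x'). Consequently, there exists a nondecreasing function φ : ℝ → ℝ such that η(x) = φ(η̄(x)) for all x ∈ X. -/
/-- Under BCN⁺-admissible noise, the corrupted class-probability function
preserves the order of the clean one, and hence the clean class-probability
function is a nondecreasing transform of the corrupted one. -/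
theorem bcn_plus_order_preservation
    {X : Type*}
    (s : X → ℝ) (u : ℝ → ℝ) (hu_mono : Monotone u)
    (hu01 : ∀ z, u z ∈ Set.Icc (0 : ℝ) 1)
    (f1 fneg : ℝ → ℝ)
    (hf1 : ∀ z, f1 z ∈ Set.Icc (0 : ℝ) 1) (hfneg : ∀ z, fneg z ∈ Set.Icc (0 : ℝ) 1)
    (hsum : ∀ z, f1 z + fneg z < 1)
    (η : X → ℝ) (hηdef : ∀ x, η x = u (s x))
    (ha : ∀ x x' : X, η x < η x' → s x < s x')
    (hb : ∀ z z' : ℝ, z ≤ z' →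
      ((1 / 2 < u z → 1 / 2 < u z' → f1 z' ≤ f1 z ∧ fneg z' ≤ fneg z) ∧
       (u z < 1 / 2 → u z' < 1 / 2 → f1 z ≤ f1 z' ∧ fneg z ≤ fneg z')))
    (hc : ∀ z z' : ℝ, z ≤ z' → f1 z' - fneg z' ≤ f1 z - fneg z)
    (ηbar : X → ℝ)
    (hηbar : ∀ x, ηbar x = (1 - f1 (s x)) * η x + fneg (s x) * (1 - η x)) :
    (∀ x x' : X, η x < η x' → ηbar x < ηbar x') ∧
    ∃ φ : ℝ → ℝ, Monotone φ ∧ ∀ x, η x = φ (ηbar x) := by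
  have main : ∀ x x' : X, η x < η x' → ηbar x < ηbar x' := by
    intro x x' h
    have hz : s x ≤ s x' := le_of_lt (ha x x' h)
    have hc' := hc _ _ hz
    have hb' := hb _ _ hz
    have hs1 := hsum (s x)
    have hs2 := hsum (s x')
    have hux : η x = u (s x) := hηdef x
    have hux' : η x' = u (s x') := hηdef x'
    rw [hηbar x, hηbar x']
    by_cases h1 : 1 / 2 < η x
    · have h2 : 1 / 2 < η x' := lt_trans h1 h
      have hcase := hb'.1 (hux ▸ h1) (hux' ▸ h2)
      nlinarith [mul_pos (by linarith : (0:ℝ) < 1 - f1 (s x') - fneg (s x'))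
          (by linarith : (0:ℝ) < η x' - η x),
        mul_nonneg (by linarith : (0:ℝ) ≤ η x - 1/2)
          (by linarith [hcase.1, hcase.2] : (0:ℝ) ≤ f1 (s x) + fneg (s x) - f1 (s x') - fneg (s x'))]
    · push_neg at h1
      by_cases h2 : η x' < 1 / 2
      · have h1' : η x < 1 / 2 := lt_trans h h2
        have hcase := hb'.2 (hux ▸ h1') (hux' ▸ h2)
        nlinarith [mul_pos (by linarith : (0:ℝ) < 1 - f1 (s x') - fneg (s x'))
            (by linarith : (0:ℝ) < η x' - η x),
          mul_nonneg (by linarith : (0:ℝ) ≤ 1/2 - η x)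
            (by linarith [hcase.1, hcase.2] : (0:ℝ) ≤ f1 (s x') + fneg (s x') - f1 (s x) - fneg (s x))]
      · push_neg at h2
        rcases lt_or_eq_of_le h1 with h1' | h1'
        · nlinarith [mul_pos (by linarith : (0:ℝ) < 1 - f1 (s x) - fneg (s x))
              (by linarith : (0:ℝ) < 1/2 - η x),
            mul_nonneg (by linarith : (0:ℝ) ≤ 1 - f1 (s x') - fneg (s x'))
              (by linarith : (0:ℝ) ≤ η x' - 1/2)]
        · have h2' : 1 / 2 < η x' := by rw [← h1']; exact h
          nlinarith [mul_pos (by linarith : (0:ℝ) < 1 - f1 (s x') - fneg (s x'))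
              (by linarith : (0:ℝ) < η x' - 1/2)]
  refine ⟨main, ?_⟩
  set S : ℝ → Set ℝ := fun t => {y | y = 0 ∨ ∃ x, η x = y ∧ ηbar x ≤ t} with hS
  have hbdd : ∀ t, BddAbove (S t) := by
    intro t
    refine ⟨1, fun y hy => ?_⟩
    rcases hy with rfl | ⟨x, rfl, _⟩
    · norm_num
    · rw [hηdef x]; exact (hu01 (s x)).2
  have hne : ∀ t, (S t).Nonempty := fun t => ⟨0, Or.inl rfl⟩
  refine ⟨fun t => sSup (S t), ?_, ?_⟩
  · intro t t' htt'
    apply csSup_le_csSup (hbdd t') (hne t)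
    intro y hy
    rcases hy with rfl | ⟨x, rfl, hx⟩
    · exact Or.inl rfl
    · exact Or.inr ⟨x, rfl, le_trans hx htt'⟩
  · intro x
    refine le_antisymm (le_csSup (hbdd _) (Or.inr ⟨x, rfl, le_refl _⟩)) ?_
    apply csSup_le (hne _)
    intro y hy
    rcases hy with rfl | ⟨x'', rfl, hx''⟩
    · rw [hηdef x]; exact (hu01 (s x)).1
    · by_contra hlt
      push_neg at hlt
      exact absurd hx'' (not_le.mpr (main x x'' hlt))
end

section
/- Let M be a probability measure on a measurable space X, suppose (f₋₁, f₁, s, η) is BCN⁺-admissible with η, η̄ measurable, and suppose ρ_max = (1/2)·sup_{x∈X} (ρ₁(x) + ρ₋₁(x)) < 1/2, where ρ_y(x) = f_y(s(x)). Let π = ∫ η dM and π̄ = ∫ η̄ dM, and assume π ∈ (0,1) and π̄ ∈ (0,1). For a measurable scorer t : X → ℝ, define 𝕀(a, b) = 1 if a·b < 0, 1/2 if b = 0, and 0 otherwise, and define the ranking regret of t with respect to a class-probability function γ and base rate p as reg(t; γ, p) = (2·p·(1 − p))⁻¹ · ∬ |γ(x) − γ(x')| · 𝕀(γ(x) − γ(x'),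 t(x) − t(x')) dM(x) dM(x'). Then for any measurable scorer t : X → ℝ, reg(t; η, π) ≤ [ π̄·(1 − π̄) / (π·(1 − π)) ] · (1 − 2ρ_max)⁻¹ · reg(t; η̄, π̄). -/
open MeasureTheory

/-- The (mis)ranking indicator: `1` if `a` and `b` have opposite signs,
`1/2` if `b = 0`, and `0` otherwise. -/
noncomputable def rankInd (a b : ℝ) : ℝ :=
  if a * b < 0 then 1 else if b = 0 then 1 / 2 else 0

/-- The ranking (AUC) regret of a scorer `t` with respect to a
class-probability function `γ`, base rate `p`, and marginal `M`. -/
noncomputable def rankRegret {X : Type*} [MeasurableSpace X] (M : Measure X)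
    (γ : X → ℝ) (p : ℝ) (t : X → ℝ) : ℝ :=
  (2 * p * (1 - p))⁻¹ *
    ∫ x, ∫ x', |γ x - γ x'| * rankInd (γ x - γ x') (t x - t x') ∂M ∂M

lemma rankInd_nonneg (a b : ℝ) : 0 ≤ rankInd a b := by
  unfold rankInd; split_ifs <;> norm_num

lemma rankInd_le_one (a b : ℝ) : rankInd a b ≤ 1 := by
  unfold rankInd; split_ifs <;> norm_num

lemma rankInd_neg_neg (a b : ℝ) : rankInd (-a) (-b) = rankInd a b := by
  unfold rankInd
  rw [neg_mul_neg]
  simp [neg_eq_zero]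

lemma rankInd_neg_congr {a a' : ℝ} (ha : a < 0) (ha' : a' < 0) (b : ℝ) :
    rankInd a b = rankInd a' b := by
  unfold rankInd
  rcases lt_trichotomy b 0 with hb | hb | hb
  · have h1 : ¬ a * b < 0 := not_lt.2 (mul_pos_of_neg_of_neg ha hb).le
    have h2 : ¬ a' * b < 0 := not_lt.2 (mul_pos_of_neg_of_neg ha' hb).le
    simp [h1, h2]
  · simp [hb]
  · have h1 : a * b < 0 := mul_neg_of_neg_of_pos ha hb
    have h2 : a' * b < 0 := mul_neg_of_neg_of_pos ha' hb
    simp [h1, h2]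

lemma measurable_rankInd {W : Type*} [MeasurableSpace W] {A B : W → ℝ}
    (hA : Measurable A) (hB : Measurable B) :
    Measurable fun w => rankInd (A w) (B w) := by
  unfold rankInd
  refine Measurable.ite ?_ measurable_const
    (Measurable.ite ?_ measurable_const measurable_const)
  · exact measurableSet_lt (hA.mul hB) measurable_const
  · exact measurableSet_eq_fun hB measurable_const

lemma key_delta (u f1 fneg : ℝ → ℝ) (hu_mono : Monotone u)
    (hu01 : ∀ z, u z ∈ Set.Icc (0 : ℝ) 1)
    (hb : ∀ z z' : ℝ, z ≤ z' →
      ((1 / 2 < u z → 1 / 2 < u z' → f1 z' ≤ f1 z ∧ fneg z' ≤ fneg z) ∧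
       (u z < 1 / 2 → u z' < 1 / 2 → f1 z ≤ f1 z' ∧ fneg z ≤ fneg z')))
    (hc : ∀ z z' : ℝ, z ≤ z' → f1 z' - fneg z' ≤ f1 z - fneg z)
    (c : ℝ) (z z' : ℝ) (hzz' : z ≤ z')
    (hcz : f1 z + fneg z ≤ c) (hcz' : f1 z' + fneg z' ≤ c) :
    (1 - c) * (u z' - u z) ≤
      ((1 - f1 z') * u z' + fneg z' * (1 - u z'))
        - ((1 - f1 z) * u z + fneg z * (1 - u z)) := by
  have hη := hu_mono hzz'
  have hA : fneg z - fneg z' ≤ f1 z - f1 z' := by have := hc z z' hzz'; linarith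
  have hu0 := (hu01 z).1
  have hu0' := (hu01 z').1
  rcases le_or_gt (u z) (1/2) with hle | hgt
  · rcases le_or_gt (fneg z) (fneg z') with hB | hB
    · nlinarith [mul_nonneg (sub_nonneg.2 hη) (sub_nonneg.2 hcz'),
        mul_nonneg hu0 (sub_nonneg.2 hA),
        mul_nonneg (by linarith : (0:ℝ) ≤ 1 - 2 * u z) (sub_nonneg.2 hB)]
    · rcases lt_or_ge (u z') (1/2) with hη' | hη'
      · have := ((hb z z' hzz').2 (lt_of_le_of_lt hη hη') hη').2
        linarith
      · nlinarith [mul_nonneg (sub_nonneg.2 hη) (sub_nonneg.2 hcz),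
          mul_nonneg hu0' (sub_nonneg.2 hA),
          mul_nonneg (by linarith : (0:ℝ) ≤ 2 * u z' - 1)
            (by linarith : (0:ℝ) ≤ fneg z - fneg z')]
  · have hη' : 1/2 < u z' := lt_of_lt_of_le hgt hη
    have hB := ((hb z z' hzz').1 hgt hη').2
    nlinarith [mul_nonneg (sub_nonneg.2 hη) (sub_nonneg.2 hcz),
      mul_nonneg hu0' (sub_nonneg.2 hA),
      mul_nonneg (by linarith : (0:ℝ) ≤ 2 * u z' - 1) (sub_nonneg.2 hB)]

lemma F_int {X : Type*} [MeasurableSpace X] (M : Measure X) [IsProbabilityMeasure M]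
    (γ τ : X → ℝ) (hγ : Measurable γ) (hτ : Measurable τ)
    (hγ01 : ∀ x, γ x ∈ Set.Icc (0:ℝ) 1) :
    (∀ x, Integrable (fun x' => |γ x - γ x'| * rankInd (γ x - γ x') (τ x - τ x')) M) ∧
    Integrable (fun x => ∫ x', |γ x - γ x'| * rankInd (γ x - γ x') (τ x - τ x') ∂M) M := by
  have hbd : ∀ x x', ‖|γ x - γ x'| * rankInd (γ x - γ x') (τ x - τ x')‖ ≤ 1 := by
    intro x x'
    rw [Real.norm_eq_abs, abs_of_nonneg (mul_nonneg (abs_nonneg _) (rankInd_nonneg _ _))]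
    have h1 : |γ x - γ x'| ≤ 1 := by
      rw [abs_le]
      constructor <;> [linarith [(hγ01 x).1, (hγ01 x').2]; linarith [(hγ01 x).2, (hγ01 x').1]]
    calc |γ x - γ x'| * rankInd (γ x - γ x') (τ x - τ x')
        ≤ 1 * 1 := mul_le_mul h1 (rankInd_le_one _ _) (rankInd_nonneg _ _) zero_le_one
      _ = 1 := one_mul 1
  have hFmeas : Measurable fun p : X × X =>
      |γ p.1 - γ p.2| * rankInd (γ p.1 - γ p.2) (τ p.1 - τ p.2) :=
    ((hγ.comp measurable_fst).sub (hγ.comp measurable_snd)).abs.mul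
      (measurable_rankInd ((hγ.comp measurable_fst).sub (hγ.comp measurable_snd))
        ((hτ.comp measurable_fst).sub (hτ.comp measurable_snd)))
  constructor
  · intro x
    refine Integrable.mono' (integrable_const 1)
      ((hFmeas.comp measurable_prodMk_left).aestronglyMeasurable)
      (ae_of_all _ fun x' => hbd x x')
  · refine Integrable.mono' (integrable_const 1)
      (hFmeas.stronglyMeasurable.integral_prod_right'.aestronglyMeasurable) ?_
    refine ae_of_all _ fun x => ?_
    calc ‖∫ x', |γ x - γ x'| * rankInd (γ x - γ x') (τ x - τ x') ∂M‖
        ≤ 1 * (M Set.univ).toReal :=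
          norm_integral_le_of_norm_le_const (ae_of_all _ fun x' => hbd x x')
      _ = 1 := by simp

/-- Under BCN⁺-admissible noise with total noise bound `ρ_max < 1/2`, the
clean AUC (ranking) regret of any scorer is bounded by
`(π̄(1-π̄)/(π(1-π))) · (1 - 2 ρ_max)⁻¹` times its corrupted AUC regret. -/
theorem bcn_plus_auc_regret_bound
    {X : Type*} [MeasurableSpace X] (M : Measure X) [IsProbabilityMeasure M]
    (s : X → ℝ) (u : ℝ → ℝ) (hu_mono : Monotone u)
    (hu01 : ∀ z, u z ∈ Set.Icc (0 : ℝ) 1)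
    (f1 fneg : ℝ → ℝ)
    (hf1 : ∀ z, f1 z ∈ Set.Icc (0 : ℝ) 1) (hfneg : ∀ z, fneg z ∈ Set.Icc (0 : ℝ) 1)
    (hsum : ∀ z, f1 z + fneg z < 1)
    (η : X → ℝ) (hηdef : ∀ x, η x = u (s x)) (hηmeas : Measurable η)
    (ha : ∀ x x' : X, η x < η x' → s x < s x')
    (hb : ∀ z z' : ℝ, z ≤ z' →
      ((1 / 2 < u z → 1 / 2 < u z' → f1 z' ≤ f1 z ∧ fneg z' ≤ fneg z) ∧
       (u z < 1 / 2 → u z' < 1 / 2 → f1 z ≤ f1 z' ∧ fneg z ≤ fneg z')))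
    (hc : ∀ z z' : ℝ, z ≤ z' → f1 z' - fneg z' ≤ f1 z - fneg z)
    (ηbar : X → ℝ)
    (hηbar : ∀ x, ηbar x = (1 - f1 (s x)) * η x + fneg (s x) * (1 - η x))
    (hηbarmeas : Measurable ηbar)
    (ρmax : ℝ) (hρdef : ρmax = (1 / 2) * ⨆ x : X, (f1 (s x) + fneg (s x)))
    (hρlt : ρmax < 1 / 2)
    (π : ℝ) (hπdef : π = ∫ x, η x ∂M) (hπ : π ∈ Set.Ioo (0 : ℝ) 1)
    (πbar : ℝ) (hπbardef : πbar = ∫ x, ηbar x ∂M) (hπbar : πbar ∈ Set.Ioo (0 : ℝ) 1)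
    (t : X → ℝ) (ht : Measurable t) :
    rankRegret M η π t
      ≤ (πbar * (1 - πbar) / (π * (1 - π))) * (1 - 2 * ρmax)⁻¹ *
        rankRegret M ηbar πbar t := by
  obtain ⟨hπ0, hπ1⟩ := hπ
  obtain ⟨hπb0, hπb1⟩ := hπbar
  have hinv : (0:ℝ) < 1 - 2 * ρmax := by linarith
  have hC0 : (0:ℝ) ≤ (1 - 2 * ρmax)⁻¹ := inv_nonneg.2 hinv.le
  -- bound from the supremum
  have hbound : ∀ x : X, f1 (s x) + fneg (s x) ≤ 2 * ρmax := by
    intro x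
    have hbdd : BddAbove (Set.range fun x : X => f1 (s x) + fneg (s x)) := by
      refine ⟨1, ?_⟩
      rintro _ ⟨y, rfl⟩
      exact (hsum (s y)).le
    have h := le_ciSup hbdd x
    rw [hρdef]; linarith
  -- ranges
  have hη01 : ∀ x, η x ∈ Set.Icc (0:ℝ) 1 := fun x => by rw [hηdef]; exact hu01 _
  have hηb01 : ∀ x, ηbar x ∈ Set.Icc (0:ℝ) 1 := by
    intro x
    obtain ⟨h1, h2⟩ := hη01 x
    obtain ⟨h3, h4⟩ := hf1 (s x)
    obtain ⟨h5, h6⟩ := hfneg (s x)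
    rw [hηbar]
    constructor
    · nlinarith [mul_nonneg (by linarith : (0:ℝ) ≤ 1 - f1 (s x)) h1,
        mul_nonneg h5 (by linarith : (0:ℝ) ≤ 1 - η x)]
    · nlinarith [mul_nonneg h3 h1,
        mul_nonneg (by linarith : (0:ℝ) ≤ 1 - fneg (s x)) (by linarith : (0:ℝ) ≤ 1 - η x)]
  -- key monotonicity inequality
  have hkey : ∀ x x' : X, η x < η x' →
      (1 - 2 * ρmax) * (η x' - η x) ≤ ηbar x' - ηbar x := by
    intro x x' hlt
    have hs := ha x x' hlt
    have h := key_delta u f1 fneg hu_mono hu01 hb hc (2 * ρmax) (s x) (s x') hs.le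
      (hbound x) (hbound x')
    rw [hηbar x, hηbar x', hηdef x, hηdef x']
    linarith
  -- pointwise inequality between integrands
  have hsymm : ∀ (γ : X → ℝ) (x x' : X),
      |γ x - γ x'| * rankInd (γ x - γ x') (t x - t x')
        = |γ x' - γ x| * rankInd (γ x' - γ x) (t x' - t x) := by
    intro γ x x'
    rw [abs_sub_comm, show γ x - γ x' = -(γ x' - γ x) by ring,
      show t x - t x' = -(t x' - t x) by ring, rankInd_neg_neg]
  have haux : ∀ x x' : X, η x < η x' →
      |η x - η x'| * rankInd (η x - η x') (t x - t x') ≤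
        (1 - 2 * ρmax)⁻¹ *
          (|ηbar x - ηbar x'| * rankInd (ηbar x - ηbar x') (t x - t x')) := by
    intro x x' hlt
    have hk := hkey x x' hlt
    have hpos : 0 < ηbar x' - ηbar x :=
      lt_of_lt_of_le (mul_pos hinv (by linarith)) hk
    have hre : rankInd (η x - η x') (t x - t x') = rankInd (ηbar x - ηbar x') (t x - t x') :=
      rankInd_neg_congr (by linarith) (by linarith) _
    rw [hre, abs_sub_comm, abs_of_pos (by linarith : 0 < η x' - η x),
      abs_sub_comm (ηbar x) (ηbar x'), abs_of_pos hpos]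
    have hle : η x' - η x ≤ (1 - 2 * ρmax)⁻¹ * (ηbar x' - ηbar x) := by
      calc η x' - η x = (1 - 2 * ρmax)⁻¹ * ((1 - 2 * ρmax) * (η x' - η x)) := by
            field_simp
        _ ≤ (1 - 2 * ρmax)⁻¹ * (ηbar x' - ηbar x) := mul_le_mul_of_nonneg_left hk hC0
    calc (η x' - η x) * rankInd (ηbar x - ηbar x') (t x - t x')
        ≤ ((1 - 2 * ρmax)⁻¹ * (ηbar x' - ηbar x)) * rankInd (ηbar x - ηbar x') (t x - t x') :=
          mul_le_mul_of_nonneg_right hle (rankInd_nonneg _ _)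
      _ = (1 - 2 * ρmax)⁻¹ * ((ηbar x' - ηbar x) * rankInd (ηbar x - ηbar x') (t x - t x')) := by
          ring
  have hpt : ∀ x x' : X,
      |η x - η x'| * rankInd (η x - η x') (t x - t x') ≤
        (1 - 2 * ρmax)⁻¹ *
          (|ηbar x - ηbar x'| * rankInd (ηbar x - ηbar x') (t x - t x')) := by
    intro x x'
    rcases lt_trichotomy (η x) (η x') with h | h | h
    · exact haux x x' h
    · rw [h, sub_self, abs_zero, zero_mul]
      exact mul_nonneg hC0 (mul_nonneg (abs_nonneg _) (rankInd_nonneg _ _))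
    · rw [hsymm η, hsymm ηbar]
      exact haux x' x h
  -- integrability
  obtain ⟨hIη, hOη⟩ := F_int M η t hηmeas ht hη01
  obtain ⟨hIηb, hOηb⟩ := F_int M ηbar t hηbarmeas ht hηb01
  have hInner : ∀ x,
      (∫ x', |η x - η x'| * rankInd (η x - η x') (t x - t x') ∂M) ≤
        (1 - 2 * ρmax)⁻¹ *
          ∫ x', |ηbar x - ηbar x'| * rankInd (ηbar x - ηbar x') (t x - t x') ∂M := by
    intro x
    rw [← integral_const_mul]
    exact integral_mono (hIη x) (((hIηb x)).const_mul _) (fun x' => hpt x x')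
  have hMain :
      (∫ x, ∫ x', |η x - η x'| * rankInd (η x - η x') (t x - t x') ∂M ∂M) ≤
        (1 - 2 * ρmax)⁻¹ *
          ∫ x, ∫ x', |ηbar x - ηbar x'| * rankInd (ηbar x - ηbar x') (t x - t x') ∂M ∂M := by
    rw [← integral_const_mul]
    exact integral_mono hOη (hOηb.const_mul _) hInner
  unfold rankRegret
  have hπne : π ≠ 0 := ne_of_gt hπ0
  have hπne1 : (1:ℝ) - π ≠ 0 := by linarith
  have hπbne : πbar ≠ 0 := ne_of_gt hπb0
  have hπbne1 : (1:ℝ) - πbar ≠ 0 := by linarith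
  have heq : ∀ I : ℝ, (πbar * (1 - πbar) / (π * (1 - π))) * (1 - 2 * ρmax)⁻¹ *
      ((2 * πbar * (1 - πbar))⁻¹ * I)
      = (2 * π * (1 - π))⁻¹ * ((1 - 2 * ρmax)⁻¹ * I) := by
    intro I
    field_simp
  rw [heq]
  have h2π : (0:ℝ) ≤ (2 * π * (1 - π))⁻¹ := inv_nonneg.2 (by nlinarith)
  exact mul_le_mul_of_nonneg_left hMain h2π
end

section
/- Let M be a probability measure on a measurable space X, let η : X → [0,1] be measurable, let ρ₁, ρ₋₁ : X → [0,1] be measurable with ρ₁(x) + ρ₋₁(x) < 1 for all x, and let η̄(x) = (1 − ρ₁(x))·η(x) + ρ₋₁(x)·(1 − η(x)). Let ℓ₁, ℓ₋₁ : ℝ → [0,∞) be any loss and s : X → ℝ any measurable scorer. Define w(x) = (1 − ρ₁(x) − ρ₋₁(x))⁻¹ and the generalized losses ℓ̃₁(s, x) = w(x)·( (1 − ρ₋₁(x))·ℓ₁(s(x)) − ρ₁(x)·ℓ₋₁(s(x)) ) and ℓ̃₋₁(s, x) = w(x)·( −ρ₋₁(x)·ℓ₁(s(x)) + (1 − ρ₁(x))·ℓ₋₁(s(x))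 ). Then, assuming all the integrals below are finite, ∫ [ η(x)·ℓ₁(s(x)) + (1 − η(x))·ℓ₋₁(s(x)) ] dM(x) = ∫ [ η̄(x)·ℓ̃₁(s, x) + (1 − η̄(x))·ℓ̃₋₁(s, x) ] dM(x); that is, the clean ℓ-risk equals the corrupted expectation of the generalized loss. -/
open MeasureTheory

/-- Method of unbiased estimators for instance- and label-dependent noise:
the clean `ℓ`-risk equals the corrupted expectation of the generalized loss. -/
theorem clean_risk_eq_corrupted_generalized_loss
    {X : Type*} [MeasurableSpace X] (M : Measure X) [IsProbabilityMeasure M]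
    (η ρ₁ ρneg : X → ℝ) (hη : Measurable η)
    (hρ₁m : Measurable ρ₁) (hρnegm : Measurable ρneg)
    (hη01 : ∀ x, η x ∈ Set.Icc (0 : ℝ) 1)
    (hρ₁ : ∀ x, ρ₁ x ∈ Set.Icc (0 : ℝ) 1) (hρneg : ∀ x, ρneg x ∈ Set.Icc (0 : ℝ) 1)
    (hadm : ∀ x, ρ₁ x + ρneg x < 1)
    (ηbar : X → ℝ)
    (hηbar : ∀ x, ηbar x = (1 - ρ₁ x) * η x + ρneg x * (1 - η x))
    (lpos lneg : ℝ → ℝ) (hlpos : ∀ v, 0 ≤ lpos v) (hlneg : ∀ v, 0 ≤ lneg v)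
    (s : X → ℝ) (hs : Measurable s)
    (w : X → ℝ) (hw : ∀ x, w x = (1 - ρ₁ x - ρneg x)⁻¹)
    (ltilpos ltilneg : (X → ℝ) → X → ℝ)
    (hltilpos : ∀ x, ltilpos s x
      = w x * ((1 - ρneg x) * lpos (s x) - ρ₁ x * lneg (s x)))
    (hltilneg : ∀ x, ltilneg s x
      = w x * (-(ρneg x) * lpos (s x) + (1 - ρ₁ x) * lneg (s x)))
    (hint₁ : Integrable (fun x => η x * lpos (s x) + (1 - η x) * lneg (s x)) M)
    (hint₂ : Integrable
      (fun x => ηbar x * ltilpos s x + (1 - ηbar x) * ltilneg s x) M) :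
    ∫ x, (η x * lpos (s x) + (1 - η x) * lneg (s x)) ∂M
      = ∫ x, (ηbar x * ltilpos s x + (1 - ηbar x) * ltilneg s x) ∂M := by
  apply integral_congr_ae
  filter_upwards with x
  have hd : 1 - ρ₁ x - ρneg x ≠ 0 := by have := hadm x; linarith
  rw [hηbar, hltilpos, hltilneg, hw]
  field_simp
  ring
end

section
/- Suppose (f₋₁, f₁, s, η) is BCN⁺-admissible with link u, and let η̄ be the corresponding corrupted class-probability function. Then for all x, x' ∈ X, s(x) ≤ s(x') implies η̄(x) ≤ η̄(x'). Consequently, there exists a nondecreasing function ū : ℝ → ℝ such that η̄(x) = ū(s(x)) for all x ∈ X. -/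
/-- Under BCN⁺-admissible noise, the corrupted class-probability function is
order preserving for the underlying scores, and hence factors through the
score via a nondecreasing link. -/
theorem bcn_plus_eta_bar_score_preserving
    {X : Type*}
    (s : X → ℝ) (u : ℝ → ℝ) (hu_mono : Monotone u)
    (hu01 : ∀ z, u z ∈ Set.Icc (0 : ℝ) 1)
    (f1 fneg : ℝ → ℝ)
    (hf1 : ∀ z, f1 z ∈ Set.Icc (0 : ℝ) 1) (hfneg : ∀ z, fneg z ∈ Set.Icc (0 : ℝ) 1)
    (hsum : ∀ z, f1 z + fneg z < 1)
    (η : X → ℝ) (hηdef : ∀ x, η x = u (s x))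
    (ha : ∀ x x' : X, η x < η x' → s x < s x')
    (hb : ∀ z z' : ℝ, z ≤ z' →
      ((1 / 2 < u z → 1 / 2 < u z' → f1 z' ≤ f1 z ∧ fneg z' ≤ fneg z) ∧
       (u z < 1 / 2 → u z' < 1 / 2 → f1 z ≤ f1 z' ∧ fneg z ≤ fneg z')))
    (hc : ∀ z z' : ℝ, z ≤ z' → f1 z' - fneg z' ≤ f1 z - fneg z)
    (ηbar : X → ℝ)
    (hηbar : ∀ x, ηbar x = (1 - f1 (s x)) * η x + fneg (s x) * (1 - η x)) :
    (∀ x x' : X, s x ≤ s x' → ηbar x ≤ ηbar x') ∧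
    ∃ ubar : ℝ → ℝ, Monotone ubar ∧ ∀ x, ηbar x = ubar (s x) := by
  set g : ℝ → ℝ := fun z => (1 - f1 z) * u z + fneg z * (1 - u z) with hg
  have key : ∀ z z' : ℝ, z ≤ z' → g z ≤ g z' := by
    intro z z' hzz
    have hu := hu_mono hzz
    have hs := hsum z; have hs' := hsum z'
    have hc' := hc z z' hzz
    have hb' := hb z z' hzz
    obtain ⟨hu0, hu1⟩ := hu01 z
    obtain ⟨hu0', hu1'⟩ := hu01 z'
    obtain ⟨hf10, hf11⟩ := hf1 z
    obtain ⟨hf10', hf11'⟩ := hf1 z'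
    obtain ⟨hn0, hn1⟩ := hfneg z
    obtain ⟨hn0', hn1'⟩ := hfneg z'
    simp only [hg]
    rcases lt_or_ge (1/2 : ℝ) (u z) with h | h
    · have hgt' : 1/2 < u z' := lt_of_lt_of_le h hu
      obtain ⟨hA, hB⟩ := hb'.1 h hgt'
      nlinarith [mul_nonneg (sub_nonneg.2 hu) (by linarith : (0:ℝ) ≤ 1 - f1 z' - fneg z'),
        mul_nonneg (by linarith : (0:ℝ) ≤ 2 * u z - 1) (sub_nonneg.2 hB),
        mul_nonneg hu0 (by linarith : (0:ℝ) ≤ (f1 z - fneg z) - (f1 z' - fneg z'))]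
    · rcases lt_or_ge (u z') (1/2 : ℝ) with h2 | h2
      · have hlt : u z < 1/2 := lt_of_le_of_lt hu h2
        obtain ⟨hA, hB⟩ := hb'.2 hlt h2
        nlinarith [mul_nonneg (sub_nonneg.2 hu) (by linarith : (0:ℝ) ≤ 1 - f1 z' - fneg z'),
          mul_nonneg (by linarith : (0:ℝ) ≤ 1 - 2 * u z) (sub_nonneg.2 hB),
          mul_nonneg hu0 (by linarith : (0:ℝ) ≤ (f1 z - fneg z) - (f1 z' - fneg z'))]
      · -- u z ≤ 1/2 ≤ u z' : use (c) across the threshold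
        nlinarith [mul_nonneg (by linarith : (0:ℝ) ≤ 1/2 - u z) (by linarith : (0:ℝ) ≤ 1 - f1 z - fneg z),
          mul_nonneg (by linarith : (0:ℝ) ≤ u z' - 1/2) (by linarith : (0:ℝ) ≤ 1 - f1 z' - fneg z')]
  have heq : ∀ x, ηbar x = g (s x) := by
    intro x; rw [hηbar x, hηdef x]
  exact ⟨fun x x' h => by rw [heq, heq]; exact key _ _ h,
    g, fun a b h => key a b h, heq⟩
end

section
/- Let M be a probability measure on a measurable space X, let η : X → [0,1] be measurable, and let f : X → [0,1] be measurable with f(x) ≤ ρ_max for all x, where ρ_max < 1/2. Let η̄(x) = (1 − 2f(x))·η(x) + f(x). Then for any measurable scorer s : X → ℝ, ∫ |η(x) − 1/2| · 𝟙[ (2η(x) − 1)·s(x) < 0 ] dM(x) ≤ (1 − 2ρ_max)⁻¹ · ∫ |η̄(x) − 1/2| · 𝟙[ (2η̄(x) − 1)·s(x) < 0 ] dM(x); that is, the 0-1 loss regret of s on the clean distribution is at most (1 − 2ρ_max)⁻¹ times its 0-1 loss regret on the corrupted distribution. -/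
open MeasureTheory

/-- Under instance-dependent noise bounded by `ρ_max < 1/2`, the 0-1 loss
regret of any scorer on the clean distribution is at most `(1 - 2 ρ_max)⁻¹`
times its 0-1 loss regret on the corrupted distribution. -/
theorem zero_one_regret_bound_idn
    {X : Type*} [MeasurableSpace X] (M : Measure X) [IsProbabilityMeasure M]
    (η f : X → ℝ) (hη : Measurable η) (hf : Measurable f)
    (hη01 : ∀ x, η x ∈ Set.Icc (0 : ℝ) 1)
    (hf0 : ∀ x, 0 ≤ f x)
    (ρmax : ℝ) (hfρ : ∀ x, f x ≤ ρmax) (hρ : ρmax < 1 / 2)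
    (ηbar : X → ℝ) (hηbar : ∀ x, ηbar x = (1 - 2 * f x) * η x + f x)
    (s : X → ℝ) (hs : Measurable s) :
    ∫ x, |η x - 1 / 2| * (if (2 * η x - 1) * s x < 0 then (1 : ℝ) else 0) ∂M
      ≤ (1 - 2 * ρmax)⁻¹ *
        ∫ x, |ηbar x - 1 / 2| *
          (if (2 * ηbar x - 1) * s x < 0 then (1 : ℝ) else 0) ∂M := by
  have hρ' : (0:ℝ) < 1 - 2 * ρmax := by linarith
  have hηbarm : Measurable ηbar := by
    have : ηbar = fun x => (1 - 2 * f x) * η x + f x := funext hηbar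
    rw [this]
    exact (((measurable_const.sub (hf.const_mul 2)).mul hη).add hf)
  -- measurability of integrands
  have hmeas1 : Measurable fun x =>
      |η x - 1 / 2| * (if (2 * η x - 1) * s x < 0 then (1 : ℝ) else 0) := by
    apply ((hη.sub measurable_const).abs).mul
    exact Measurable.ite
      (measurableSet_lt (((hη.const_mul 2).sub measurable_const).mul hs) measurable_const)
      measurable_const measurable_const
  have hmeas2 : Measurable fun x =>
      |ηbar x - 1 / 2| * (if (2 * ηbar x - 1) * s x < 0 then (1 : ℝ) else 0) := by
    apply ((hηbarm.sub measurable_const).abs).mul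
    exact Measurable.ite
      (measurableSet_lt (((hηbarm.const_mul 2).sub measurable_const).mul hs) measurable_const)
      measurable_const measurable_const
  have hbnd : ∀ (g : X → ℝ), (∀ x, g x ∈ Set.Icc (0:ℝ) 1) →
      ∀ x, |(|g x - 1/2| * (if (2 * g x - 1) * s x < 0 then (1:ℝ) else 0))| ≤ 1 := by
    intro g hg x
    have h1 := (hg x).1; have h2 := (hg x).2
    have : |g x - 1/2| ≤ 1/2 := abs_le.2 ⟨by linarith, by linarith⟩
    rw [abs_mul, abs_abs]
    calc |g x - 1/2| * |(if (2 * g x - 1) * s x < 0 then (1:ℝ) else 0)|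
        ≤ (1/2) * 1 := by
          apply mul_le_mul this _ (abs_nonneg _) (by norm_num)
          split <;> simp
      _ ≤ 1 := by norm_num
  have hηbar01 : ∀ x, ηbar x ∈ Set.Icc (0:ℝ) 1 := by
    intro x
    have h1 := (hη01 x).1; have h2 := (hη01 x).2
    have hfx := hf0 x
    have hfx2 : f x ≤ ρmax := hfρ x
    have hpos : (0:ℝ) < 1 - 2 * f x := by linarith
    rw [hηbar x]
    constructor
    · positivity
    · nlinarith
  have hint1 : Integrable (fun x =>
      |η x - 1 / 2| * (if (2 * η x - 1) * s x < 0 then (1 : ℝ) else 0)) M := by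
    refine (integrable_const (1:ℝ)).mono' hmeas1.aestronglyMeasurable ?_
    exact Filter.Eventually.of_forall (hbnd η hη01)
  have hint2 : Integrable (fun x =>
      |ηbar x - 1 / 2| * (if (2 * ηbar x - 1) * s x < 0 then (1 : ℝ) else 0)) M := by
    refine (integrable_const (1:ℝ)).mono' hmeas2.aestronglyMeasurable ?_
    exact Filter.Eventually.of_forall (hbnd ηbar hηbar01)
  -- pointwise bound
  have key : ∀ x,
      |η x - 1 / 2| * (if (2 * η x - 1) * s x < 0 then (1 : ℝ) else 0)
        ≤ (1 - 2 * ρmax)⁻¹ *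
          (|ηbar x - 1 / 2| * (if (2 * ηbar x - 1) * s x < 0 then (1 : ℝ) else 0)) := by
    intro x
    have hfx2 : f x ≤ ρmax := hfρ x
    have hpos : (0:ℝ) < 1 - 2 * f x := by linarith
    have hdiff : ηbar x - 1/2 = (1 - 2 * f x) * (η x - 1/2) := by
      rw [hηbar x]; ring
    have habs : |ηbar x - 1/2| = (1 - 2 * f x) * |η x - 1/2| := by
      rw [hdiff, abs_mul, abs_of_pos hpos]
    have hsign : ((2 * ηbar x - 1) * s x < 0) ↔ ((2 * η x - 1) * s x < 0) := by
      have : 2 * ηbar x - 1 = (1 - 2 * f x) * (2 * η x - 1) := by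
        rw [hηbar x]; ring
      rw [this, mul_assoc]
      constructor
      · intro h
        by_contra h2
        exact absurd h (not_lt.2 (mul_nonneg hpos.le (not_lt.1 h2)))

      · intro h
        exact mul_neg_of_pos_of_neg hpos h
    rw [habs]
    by_cases hc : (2 * η x - 1) * s x < 0
    · rw [if_pos hc, if_pos (hsign.mpr hc)]
      rw [mul_one, mul_one]
      rw [← mul_assoc]
      have hge : 1 ≤ (1 - 2 * ρmax)⁻¹ * (1 - 2 * f x) := by
        have : 1 - 2 * ρmax ≤ 1 - 2 * f x := by linarith
        calc (1:ℝ) = (1 - 2 * ρmax)⁻¹ * (1 - 2 * ρmax) := by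
              field_simp
          _ ≤ (1 - 2 * ρmax)⁻¹ * (1 - 2 * f x) := by
              apply mul_le_mul_of_nonneg_left this (le_of_lt (inv_pos.2 hρ'))
      nlinarith [abs_nonneg (η x - 1/2)]
    · rw [if_neg hc, if_neg (fun h => hc (hsign.mp h))]
      simp
  calc ∫ x, |η x - 1 / 2| * (if (2 * η x - 1) * s x < 0 then (1 : ℝ) else 0) ∂M
      ≤ ∫ x, (1 - 2 * ρmax)⁻¹ *
          (|ηbar x - 1 / 2| * (if (2 * ηbar x - 1) * s x < 0 then (1 : ℝ) else 0)) ∂M := by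
        exact integral_mono hint1 (hint2.const_mul _) key
    _ = (1 - 2 * ρmax)⁻¹ * ∫ x, |ηbar x - 1 / 2| *
          (if (2 * ηbar x - 1) * s x < 0 then (1 : ℝ) else 0) ∂M := by
        rw [integral_const_mul]
end

section
/- Let η : X → [0,1], let f : X → [0,1] satisfy f(x) < 1/2 for all x, and let η̄(x) = (1 − 2f(x))·η(x) + f(x). Then for all x ∈ X, η(x) > 1/2 if and only if η̄(x) > 1/2. Consequently, the Bayes-optimal classifier for 0-1 loss, x ↦ sign(2η(x) − 1), is unchanged by the corruption. -/
/-- Under instance-dependent noise with `f x < 1/2`, the clean and corrupted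
class-probability functions lie on the same side of `1/2`; consequently the
Bayes-optimal 0-1 classifier `x ↦ sign(2 η x - 1)` is unchanged. -/
theorem bayes_classifier_unchanged_idn
    {X : Type*}
    (η f : X → ℝ)
    (hη01 : ∀ x, η x ∈ Set.Icc (0 : ℝ) 1)
    (hf0 : ∀ x, 0 ≤ f x) (hfhalf : ∀ x, f x < 1 / 2)
    (ηbar : X → ℝ) (hηbar : ∀ x, ηbar x = (1 - 2 * f x) * η x + f x) :
    (∀ x : X, η x > 1 / 2 ↔ ηbar x > 1 / 2) ∧
    (∀ x : X, Real.sign (2 * η x - 1) = Real.sign (2 * ηbar x - 1)) := by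
  have key : ∀ x, 2 * ηbar x - 1 = (1 - 2 * f x) * (2 * η x - 1) := by
    intro x; rw [hηbar x]; ring
  have hpos : ∀ x, 0 < 1 - 2 * f x := fun x => by linarith [hfhalf x]
  constructor
  · intro x
    constructor
    · intro h
      nlinarith [key x, hpos x]
    · intro h
      nlinarith [key x, hpos x]
  · intro x
    rcases lt_trichotomy (2 * η x - 1) 0 with h | h | h
    · rw [Real.sign_of_neg h, Real.sign_of_neg]
      rw [key x]; exact mul_neg_of_pos_of_neg (hpos x) h
    · rw [h, Real.sign_zero, key x, h, mul_zero, Real.sign_zero]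
    · rw [Real.sign_of_pos h, Real.sign_of_pos]
      rw [key x]; exact mul_pos (hpos x) h
end

section
/- Let g : [0,1] → [0,1/2) be a function that is nondecreasing on [0,1/2] and nonincreasing on [1/2,1], and define φ : [0,1] → ℝ by φ(z) = (1 − 2g(z))·z + g(z). Then φ is strictly increasing: for all x, y ∈ [0,1], x < y implies φ(x) < φ(y). Consequently, under symmetric probabilistically transformed noise with η̄ = φ ∘ η, the corrupted class-probability function η̄ is order preserving for η. -/
/-- For symmetric probabilistically transformed noise with flip function
`g : [0,1] → [0,1/2)` nondecreasing on `[0,1/2]` and nonincreasing on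
`[1/2,1]`, the map `φ(z) = (1 - 2 g z) z + g z` is strictly increasing on
`[0,1]`; consequently the corrupted class-probability function `η̄ = φ ∘ η`
is order preserving for `η`. -/
theorem ptn_phi_strictly_increasing
    (g : ℝ → ℝ)
    (hg0 : ∀ z ∈ Set.Icc (0 : ℝ) 1, 0 ≤ g z)
    (hghalf : ∀ z ∈ Set.Icc (0 : ℝ) 1, g z < 1 / 2)
    (hg_incr : ∀ z z' : ℝ, 0 ≤ z → z ≤ z' → z' ≤ 1 / 2 → g z ≤ g z')
    (hg_decr : ∀ z z' : ℝ, 1 / 2 ≤ z → z ≤ z' → z' ≤ 1 → g z' ≤ g z)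
    (φ : ℝ → ℝ) (hφ : ∀ z, φ z = (1 - 2 * g z) * z + g z) :
    (∀ x y : ℝ, x ∈ Set.Icc (0 : ℝ) 1 → y ∈ Set.Icc (0 : ℝ) 1 →
      x < y → φ x < φ y) ∧
    ∀ {X : Type} (η : X → ℝ), (∀ x, η x ∈ Set.Icc (0 : ℝ) 1) →
      ∀ (ηbar : X → ℝ), (∀ x, ηbar x = φ (η x)) →
        ∀ x x' : X, η x < η x' → ηbar x < ηbar x' := by
  have key : ∀ x y : ℝ, x ∈ Set.Icc (0 : ℝ) 1 → y ∈ Set.Icc (0 : ℝ) 1 →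
      x < y → φ x < φ y := by
    intro x y hx hy hxy
    obtain ⟨hx0, hx1⟩ := hx
    obtain ⟨hy0, hy1⟩ := hy
    have hgx := hghalf x ⟨hx0, hx1⟩
    have hgy := hghalf y ⟨hy0, hy1⟩
    rw [hφ, hφ]
    have h : (g x ≤ g y ∧ x ≤ 1 / 2) ∨ (g y ≤ g x ∧ 1 / 2 ≤ y) := by
      rcases le_or_gt y (1 / 2) with h1 | h1
      · exact Or.inl ⟨hg_incr x y hx0 hxy.le h1, le_trans hxy.le h1⟩
      rcases le_or_gt (1 / 2) x with h2 | h2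
      · exact Or.inr ⟨hg_decr x y h2 hxy.le hy1, h1.le⟩
      rcases le_total (g x) (g y) with h3 | h3
      · exact Or.inl ⟨h3, h2.le⟩
      · exact Or.inr ⟨h3, h1.le⟩
    rcases h with ⟨h1, h2⟩ | ⟨h1, h2⟩
    · nlinarith [mul_nonneg (sub_nonneg.2 h1) (by linarith : (0:ℝ) ≤ 1 - 2 * x),
        mul_pos (by linarith : (0:ℝ) < 1 - 2 * g y) (by linarith : (0:ℝ) < y - x)]
    · nlinarith [mul_nonneg (sub_nonneg.2 h1) (by linarith : (0:ℝ) ≤ 2 * y - 1),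
        mul_pos (by linarith : (0:ℝ) < 1 - 2 * g x) (by linarith : (0:ℝ) < y - x)]
  refine ⟨key, ?_⟩
  intro X η hη ηbar hηbar x x' h
  rw [hηbar, hηbar]
  exact key _ _ (hη x) (hη x') h
end

section
/- Let g : [0,1] → [0,1] be differentiable with g(z) ≤ ρ_max for all z, where ρ_max < 1/2, and suppose g'(z)·(z − 1/2) ≤ 0 for all z ∈ [0,1] (i.e. g is nondecreasing below 1/2 and nonincreasing above 1/2). Define φ(z) = (1 − 2g(z))·z + g(z). Then for all z ∈ [0,1], φ'(z) ≥ 1 − 2ρ_max > 0; in particular φ is strictly increasing on [0,1]. -/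
/-- For symmetric PTN noise with differentiable flip function `g` bounded by
`ρ_max < 1/2` and satisfying `g'(z)·(z - 1/2) ≤ 0` on `[0,1]`, the corrupted
link `φ(z) = (1 - 2 g z) z + g z` has derivative at least `1 - 2 ρ_max > 0`
on `[0,1]`, and in particular is strictly increasing on `[0,1]`. -/
theorem ptn_phi_derivative_bound
    (g g' : ℝ → ℝ)
    (hg01 : ∀ z ∈ Set.Icc (0 : ℝ) 1, g z ∈ Set.Icc (0 : ℝ) 1)
    (ρmax : ℝ) (hgρ : ∀ z ∈ Set.Icc (0 : ℝ) 1, g z ≤ ρmax) (hρ : ρmax < 1 / 2)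
    (hgd : ∀ z ∈ Set.Icc (0 : ℝ) 1, HasDerivAt g (g' z) z)
    (hadm : ∀ z ∈ Set.Icc (0 : ℝ) 1, g' z * (z - 1 / 2) ≤ 0)
    (φ : ℝ → ℝ) (hφ : ∀ z, φ z = (1 - 2 * g z) * z + g z) :
    (∀ z ∈ Set.Icc (0 : ℝ) 1,
      HasDerivAt φ (1 - 2 * g z + g' z * (1 - 2 * z)) z ∧
      1 - 2 * ρmax ≤ 1 - 2 * g z + g' z * (1 - 2 * z)) ∧
    (0 < 1 - 2 * ρmax) ∧
    StrictMonoOn φ (Set.Icc (0 : ℝ) 1) := by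
  have hderiv : ∀ z ∈ Set.Icc (0 : ℝ) 1,
      HasDerivAt φ (1 - 2 * g z + g' z * (1 - 2 * z)) z := by
    intro z hz
    have h1 : HasDerivAt (fun z => (1 - 2 * g z) * z + g z)
        ((-(2 * g' z)) * z + (1 - 2 * g z) * 1 + g' z) z := by
      exact ((((hgd z hz).const_mul 2).const_sub 1).mul (hasDerivAt_id z)).add (hgd z hz)
    have heq : (-(2 * g' z)) * z + (1 - 2 * g z) * 1 + g' z
        = 1 - 2 * g z + g' z * (1 - 2 * z) := by ring
    rw [heq] at h1
    exact (funext hφ : φ = _) ▸ h1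
  have hbound : ∀ z ∈ Set.Icc (0 : ℝ) 1,
      1 - 2 * ρmax ≤ 1 - 2 * g z + g' z * (1 - 2 * z) := by
    intro z hz
    have h1 := hgρ z hz
    have h2 := hadm z hz
    nlinarith
  refine ⟨fun z hz => ⟨hderiv z hz, hbound z hz⟩, by linarith, ?_⟩
  apply strictMonoOn_of_hasDerivWithinAt_pos (convex_Icc 0 1)
    (fun z hz => (hderiv z hz).continuousAt.continuousWithinAt)
    (fun z hz => (hderiv z (interior_subset hz)).hasDerivWithinAt)
  intro z hz
  have := hbound z (interior_subset hz)
  linarith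
end
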